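/- A semisimple submodule S of an R-module M is small in M if and only if S ⊆ Rad(M). -/

import Mathlib

/-- A submodule `N` of `M` is small (superfluous): `N + A = M` implies `A = M`. -/
def IsSmallSubmodule {R M : Type*} [Ring R] [AddCommGroup M] [Module R M]
    (N : Submodule R M) : Prop :=
  ∀ A : Submodule R M, N ⊔ A = ⊤ → A = ⊤

/-- `M` is an fs-module: it has only finitely many small submodules. -/
def IsFsModule (R M : Type*) [Ring R] [AddCommGroup M] [Module R M] : Prop :=
  {N : Submodule R M | IsSmallSubmodule N}.Finite

/-- The radical of `M`, as the sum of all small submodules of `M`. -/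
def modRad (R M : Type*) [Ring R] [AddCommGroup M] [Module R M] : Submodule R M :=
  sSup {N : Submodule R M | IsSmallSubmodule N}

/-- The radical of `M`, as the intersection of all maximal submodules of `M`. -/
def modRad' (R M : Type*) [Ring R] [AddCommGroup M] [Module R M] : Submodule R M :=
  sInf {N : Submodule R M | IsCoatom N}

/-- The socle of `M`: the sum of all minimal (simple) submodules of `M`. -/
def modSoc (R M : Type*) [Ring R] [AddCommGroup M] [Module R M] : Submodule R M :=
  sSup {N : Submodule R M | IsAtom N}

/-- `M` has finite hollow dimension: for every descending chain `N₁ ⊇ N₂ ⊇ ⋯`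
there is `n` such that `Nₙ / N_k` is small in `M / N_k` for all `k ≥ n`. -/
def HasFiniteHollowDim (R M : Type*) [Ring R] [AddCommGroup M] [Module R M] : Prop :=
  ∀ N : ℕ → Submodule R M, (∀ i j, i ≤ j → N j ≤ N i) →
    ∃ n, ∀ k, n ≤ k → IsSmallSubmodule (Submodule.map (N k).mkQ (N n))

/-- `M` has finite Goldie dimension: it contains no infinite direct sum of
nonzero submodules. -/
def HasFiniteGoldieDim (R M : Type*) [Ring R] [AddCommGroup M] [Module R M] : Prop :=
  ¬ ∃ f : ℕ → Submodule R M, (∀ i, f i ≠ ⊥) ∧ iSupIndep f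

section helpers

variable {R M : Type*} [Ring R] [AddCommGroup M] [Module R M] {S : Submodule R M}

private lemma map_subtype_bot_iff (t : Submodule R S) :
    t.map S.subtype = ⊥ ↔ t = ⊥ := by
  constructor
  · intro h
    have := congrArg (Submodule.comap S.subtype) h
    rwa [Submodule.comap_map_eq_of_injective S.injective_subtype, Submodule.comap_bot,
      Submodule.ker_subtype] at this
  · rintro rfl; exact Submodule.map_bot _

private lemma isAtom_map_subtype {t : Submodule R S} (ht : IsAtom t) :
    IsAtom (t.map S.subtype) := by
  constructor
  · intro h
    exact ht.1 ((map_subtype_bot_iff t).1 h)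
  · intro b hb
    have hbS : b ≤ S := hb.le.trans (Submodule.map_subtype_le S t)
    have hb2 : Submodule.map S.subtype (Submodule.comap S.subtype b) = b := by
      rw [Submodule.map_comap_subtype, inf_eq_right.2 hbS]
    have hlt : Submodule.comap S.subtype b < t := by
      refine lt_of_le_of_ne ?_ ?_
      · have := Submodule.comap_mono (f := S.subtype) hb.le
        rwa [Submodule.comap_map_eq_of_injective S.injective_subtype] at this
      · intro h
        apply hb.ne
        rw [← hb2, h]
    rw [← hb2, ht.2 _ hlt, Submodule.map_bot]

end helpers

theorem semisimple_submodule_small_iff_le_rad (R M : Type*) [Ring R] [AddCommGroup M]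
    [Module R M] (S : Submodule R M) (hS : IsSemisimpleModule R S) :
    IsSmallSubmodule S ↔ S ≤ modRad' R M := by
  haveI : ComplementedLattice (Submodule R S) := hS.toComplementedLattice
  constructor
  · intro hsmall
    refine le_sInf fun m hm => ?_
    by_contra h
    have hlt : m < S ⊔ m := lt_of_le_of_ne le_sup_right (fun he => h (he ▸ le_sup_left))
    exact hm.1 (hsmall m (hm.2 _ hlt))
  · intro hrad A hA
    by_contra hAne
    -- complement C of S ⊓ A inside S
    obtain ⟨x', hx'⟩ := exists_isCompl ((S ⊓ A).comap S.subtype)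
    set C : Submodule R M := x'.map S.subtype with hC
    have hCS : C ≤ S := Submodule.map_subtype_le S x'
    have hmapSA : ((S ⊓ A).comap S.subtype).map S.subtype = S ⊓ A := by
      rw [Submodule.map_comap_subtype, inf_eq_right.2 inf_le_left]
    have hCsup : (S ⊓ A) ⊔ C = S := by
      rw [← hmapSA, hC, ← Submodule.map_sup, hx'.sup_eq_top, Submodule.map_top,
        Submodule.range_subtype]
    have hCinf : (S ⊓ A) ⊓ C = ⊥ := by
      rw [← hmapSA, hC, ← Submodule.map_inf _ S.injective_subtype,
        hx'.inf_eq_bot, Submodule.map_bot]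
    have hCA_top : C ⊔ A = ⊤ := by
      have h6 : (S ⊓ A) ⊔ C ⊔ A = C ⊔ A := by
        rw [sup_comm (S ⊓ A) C, sup_assoc, sup_eq_right.2 (inf_le_right : S ⊓ A ≤ A)]
      rw [← h6, hCsup, hA]
    have hCA_bot : C ⊓ A = ⊥ := by
      have h4 : C ⊓ A = (S ⊓ A) ⊓ C := by
        rw [inf_comm (S ⊓ A) C, ← inf_assoc, inf_eq_left.mpr hCS]
      rw [h4, hCinf]
    have hCne : C ≠ ⊥ := by
      intro h
      apply hAne
      rw [← hA]
      have hSA : S ≤ A := by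
        have h5 := hCsup
        rw [h, sup_bot_eq] at h5
        rw [← h5]; exact inf_le_right
      rw [sup_eq_right.2 hSA]
    -- find an atom T ≤ C
    have hx'ne : x' ≠ ⊥ := fun h => hCne (by rw [hC, h, Submodule.map_bot])
    obtain ⟨t', ht', ht'le⟩ := (IsAtomic.eq_bot_or_exists_atom_le x').resolve_left hx'ne
    set T : Submodule R M := t'.map S.subtype with hT
    have hTatom : IsAtom T := isAtom_map_subtype ht'
    have hTC : T ≤ C := Submodule.map_mono ht'le
    -- complement D of T inside C
    obtain ⟨d'', hd''⟩ := exists_isCompl t'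
    set D : Submodule R M := (d'' ⊓ x').map S.subtype with hD
    have hDC : D ≤ C := Submodule.map_mono inf_le_right
    have hTD_sup : T ⊔ D = C := by
      rw [hT, hD, hC, ← Submodule.map_sup]
      congr 1
      rw [← sup_inf_assoc_of_le d'' ht'le, hd''.sup_eq_top, top_inf_eq]
    have hTD_inf : T ⊓ D = ⊥ := by
      rw [hT, hD, ← Submodule.map_inf _ S.injective_subtype, ← inf_assoc,
        hd''.inf_eq_bot, bot_inf_eq, Submodule.map_bot]
    -- m := D ⊔ A is a coatom complementing T
    have hsup : T ⊔ (D ⊔ A) = ⊤ := by rw [← sup_assoc, hTD_sup, hCA_top]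
    have key : (D ⊔ A) ⊓ C = D := by
      rw [sup_inf_assoc_of_le A hDC, inf_comm A C, hCA_bot, sup_bot_eq]
    have hinf : T ⊓ (D ⊔ A) = ⊥ := by
      rw [inf_comm T (D ⊔ A), ← inf_eq_right.mpr hTC, ← inf_assoc, key, inf_comm D T, hTD_inf]
    have hcompl : IsCompl T (D ⊔ A) := ⟨disjoint_iff.mpr hinf, codisjoint_iff.mpr hsup⟩
    have hcoatom : IsCoatom (D ⊔ A) := hcompl.isAtom_iff_isCoatom.mp hTatom
    have hTle : T ≤ D ⊔ A :=
      le_trans (le_trans (hTC.trans hCS) hrad) (sInf_le hcoatom)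
    exact hTatom.1 (by rw [← hinf, inf_eq_left.mpr hTle])
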